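/- Let δ₁, δ_{2,3} ∈ (0,1], 0 < θ < min{δ₁, δ_{2,3}}, α > 0, and set δ₀ := min{θ, δ₁ - θ, δ_{2,3} - θ}. Then for every real A ≥ 1 and integer B ≥ 0, the sum over integers k₂ ≥ k₃ ≥ 0 with k₂ ≥ B and integers j₂, j₃ ≥ 1 with j₃ ≥ A of 2^{-(k₂-k₃)α} · j₂^{-1} · j₃^{-1} · (2^{-k₂} j₂^{-1} + 2^{-k₃} j₃^{-1})^{δ_{2,3}} / (j₂ j₃^{-1} + j₂^{-1} j₃)^{θ} is bounded by a constant times A^{-δ₀} · 2^{-B·min{δ₀, α}} · (B+1). -/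

import Mathlib

open scoped ENNReal

section AuxLemmasForStmt2

lemma real_key {μ : ℝ} (hμ : 0 < μ) (hμ1 : μ ≤ 1) {x : ℝ} (hx : 1 ≤ x) :
    x ^ (-(1+μ)) ≤ (2/μ) * (x ^ (-μ) - (x+1) ^ (-μ)) := by
  have hx0 : (0:ℝ) < x := lt_of_lt_of_le one_pos hx
  have hx1 : (0:ℝ) < x + 1 := by linarith
  -- Bernoulli
  have hb : (1 + (-(1/(x+1)))) ^ μ ≤ 1 + μ * (-(1/(x+1))) := by
    apply rpow_one_add_le_one_add_mul_self _ hμ.le hμ1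
    have : 1/(x+1) ≤ 1 := by
      rw [div_le_one hx1]; linarith
    linarith
  have e1 : 1 + (-(1/(x+1))) = x/(x+1) := by field_simp; ring
  rw [e1] at hb
  have hPpos : 0 < x ^ (-μ) := Real.rpow_pos_of_pos hx0 _
  have h1 : (x+1) ^ (-μ) ≤ (1 - μ/(x+1)) * x ^ (-μ) := by
    have e3 : (x+1) ^ (-μ) = (x/(x+1)) ^ μ * x ^ (-μ) := by
      rw [Real.div_rpow hx0.le hx1.le, Real.rpow_neg hx0.le, Real.rpow_neg hx1.le,
        div_eq_mul_inv]
      have hxμ : x ^ μ ≠ 0 := (Real.rpow_pos_of_pos hx0 μ).ne'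
      field_simp
    rw [e3]
    apply mul_le_mul_of_nonneg_right _ hPpos.le
    calc (x/(x+1)) ^ μ ≤ 1 + μ * (-(1/(x+1))) := hb
      _ = 1 - μ/(x+1) := by ring
  have h2 : μ/(x+1) * x ^ (-μ) ≤ x ^ (-μ) - (x+1) ^ (-μ) := by nlinarith
  have e4 : x ^ (-(1+μ)) = x ^ (-μ) * x⁻¹ := by
    rw [← Real.rpow_neg_one x, ← Real.rpow_add hx0]; ring_nf
  rw [e4]
  have h3 : x ^ (-μ) * x⁻¹ ≤ (2/μ) * (μ/(x+1) * x ^ (-μ)) := by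
    have hxx : x⁻¹ ≤ 2/(x+1) := by
      rw [inv_eq_one_div, div_le_div_iff₀ hx0 hx1]; linarith
    have : (2/μ) * (μ/(x+1) * x ^ (-μ)) = (2/(x+1)) * x ^ (-μ) := by
      field_simp
    rw [this]
    calc x ^ (-μ) * x⁻¹ ≤ x ^ (-μ) * (2/(x+1)) :=
          mul_le_mul_of_nonneg_left hxx hPpos.le
      _ = (2/(x+1)) * x ^ (-μ) := by ring
  calc x ^ (-μ) * x⁻¹ ≤ (2/μ) * (μ/(x+1) * x ^ (-μ)) := h3
    _ ≤ (2/μ) * (x ^ (-μ) - (x+1) ^ (-μ)) := by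
        apply mul_le_mul_of_nonneg_left h2
        positivity

lemma tail_real {μ : ℝ} (hμ : 0 < μ) (hμ1 : μ ≤ 1) (N : ℕ) (hN : 1 ≤ N) :
    ∑' m : ℕ, ((N + m : ℕ) : ℝ) ^ (-(1+μ)) ≤ (2/μ) * (N:ℝ) ^ (-μ) := by
  set c : ℕ → ℝ := fun m => ((N + m : ℕ) : ℝ) ^ (-μ) with hc
  set f : ℕ → ℝ := fun m => ((N + m : ℕ) : ℝ) ^ (-(1+μ)) with hf
  have hx : ∀ m : ℕ, (1:ℝ) ≤ ((N + m : ℕ) : ℝ) := by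
    intro m
    exact_mod_cast Nat.le_add_right_of_le hN
  have h_fg : ∀ m, f m ≤ (2/μ) * (c m - c (m+1)) := by
    intro m
    have := real_key hμ hμ1 (hx m)
    have e : (((N + m : ℕ) : ℝ) + 1) = ((N + (m+1) : ℕ) : ℝ) := by push_cast; ring
    rw [e] at this
    exact this
  have h_f_nonneg : ∀ m, 0 ≤ f m := fun m =>
    Real.rpow_nonneg (by positivity) _
  have h_sum_f : Summable f := by
    have h : Summable (fun n : ℕ => (n:ℝ) ^ (-(1+μ))) :=
      Real.summable_nat_rpow.mpr (by linarith)
    exact h.comp_injective (add_right_injective N)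
  have hnn : ∀ m, 0 ≤ c m - c (m+1) := by
    intro m
    by_contra hlt
    push_neg at hlt
    have hneg : (2/μ) * (c m - c (m+1)) < 0 :=
      mul_neg_of_pos_of_neg (by positivity) (by linarith)
    linarith [h_fg m, h_f_nonneg m]
  have hc0 : Filter.Tendsto c Filter.atTop (nhds 0) := by
    have h1 : Filter.Tendsto (fun m : ℕ => ((N + m : ℕ) : ℝ)) Filter.atTop Filter.atTop := by
      apply Filter.tendsto_atTop_mono (fun m => ?_) tendsto_natCast_atTop_atTop
      exact_mod_cast Nat.le_add_left m N
    exact (tendsto_rpow_neg_atTop hμ).comp h1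
  have h_tel : HasSum (fun m => c m - c (m+1)) (c 0) := by
    rw [hasSum_iff_tendsto_nat_of_nonneg hnn (c 0)]
    have e : ∀ n : ℕ, ∑ i ∈ Finset.range n, (c i - c (i+1)) = c 0 - c n :=
      fun n => Finset.sum_range_sub' c n
    simp only [e]
    simpa using Filter.Tendsto.sub tendsto_const_nhds hc0
  calc ∑' m, f m ≤ ∑' m, (2/μ) * (c m - c (m+1)) :=
        Summable.tsum_le_tsum h_fg h_sum_f (h_tel.summable.mul_left _)
    _ = (2/μ) * (c 0) := by rw [tsum_mul_left, h_tel.tsum_eq]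
    _ = (2/μ) * (N:ℝ) ^ (-μ) := by simp [hc]

lemma tail_ennreal {μ : ℝ} (hμ : 0 < μ) (hμ1 : μ ≤ 1) (N : ℕ) (hN : 1 ≤ N) :
    ∑' m : ℕ, ((N + m : ℕ) : ℝ≥0∞) ^ (-(1+μ)) ≤
      ENNReal.ofReal (2/μ) * ((N:ℝ≥0∞)) ^ (-μ) := by
  have hpos : ∀ m : ℕ, (0:ℝ) < ((N + m : ℕ) : ℝ) := by
    intro m; have : 1 ≤ N + m := Nat.le_add_right_of_le hN; positivity
  have e : ∀ m : ℕ, ((N + m : ℕ) : ℝ≥0∞) ^ (-(1+μ)) =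
      ENNReal.ofReal (((N + m : ℕ) : ℝ) ^ (-(1+μ))) := by
    intro m
    rw [← ENNReal.ofReal_natCast, ENNReal.ofReal_rpow_of_pos (hpos m)]
  simp only [e]
  rw [← ENNReal.ofReal_tsum_of_nonneg (fun m => Real.rpow_nonneg (hpos m).le _)]
  · have hNpos : (0:ℝ) < (N:ℝ) := by exact_mod_cast hN
    calc ENNReal.ofReal (∑' m : ℕ, ((N + m : ℕ) : ℝ) ^ (-(1+μ)))
        ≤ ENNReal.ofReal ((2/μ) * (N:ℝ) ^ (-μ)) :=
          ENNReal.ofReal_le_ofReal (tail_real hμ hμ1 N hN)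
      _ = ENNReal.ofReal (2/μ) * ((N:ℝ≥0∞)) ^ (-μ) := by
          rw [ENNReal.ofReal_mul (by positivity), ← ENNReal.ofReal_rpow_of_pos hNpos,
            ENNReal.ofReal_natCast]
  · have h : Summable (fun n : ℕ => (n:ℝ) ^ (-(1+μ))) :=
      Real.summable_nat_rpow.mpr (by linarith)
    exact h.comp_injective (add_right_injective N)

lemma geom_ne_top {ν : ℝ} (hν : 0 < ν) :
    (∑' m : ℕ, ((m : ℝ≥0∞) + 1) * (2:ℝ≥0∞) ^ (-(m:ℝ) * ν)) ≠ ⊤ := by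
  have e : ∀ m : ℕ, ((m : ℝ≥0∞) + 1) * (2:ℝ≥0∞) ^ (-(m:ℝ) * ν) =
      ENNReal.ofReal (((m:ℝ) + 1) * (2:ℝ) ^ (-(m:ℝ) * ν)) := by
    intro m
    rw [ENNReal.ofReal_mul (by positivity), ← ENNReal.ofReal_rpow_of_pos two_pos]
    congr 1
    · rw [ENNReal.ofReal_add (by positivity) zero_le_one, ENNReal.ofReal_natCast,
        ENNReal.ofReal_one]
    · norm_num
  simp only [e]
  rw [← ENNReal.ofReal_tsum_of_nonneg (fun m => by positivity)]
  · exact ENNReal.ofReal_ne_top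
  · have hr : ‖(2:ℝ) ^ (-ν)‖ < 1 := by
      rw [Real.norm_eq_abs, abs_of_nonneg (Real.rpow_nonneg (by norm_num) _)]
      calc (2:ℝ) ^ (-ν) < (2:ℝ) ^ (0:ℝ) :=
            Real.rpow_lt_rpow_of_exponent_lt one_lt_two (by linarith)
        _ = 1 := Real.rpow_zero 2
    have h1 : Summable (fun m : ℕ => (m:ℝ) * ((2:ℝ) ^ (-ν)) ^ m) := by
      have := summable_pow_mul_geometric_of_norm_lt_one 1 hr
      simpa using this
    have h2 : Summable (fun m : ℕ => ((2:ℝ) ^ (-ν)) ^ m) :=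
      summable_geometric_of_norm_lt_one hr
    have h3 := h1.add h2
    apply h3.congr
    intro m
    have : (2:ℝ) ^ (-(m:ℝ) * ν) = ((2:ℝ) ^ (-ν)) ^ m := by
      rw [← Real.rpow_natCast ((2:ℝ) ^ (-ν)) m, ← Real.rpow_mul (by norm_num)]
      ring_nf
    rw [this]; ring

lemma jlem_half {δ θ' μ : ℝ} (hδ : 0 < δ) (hδ1 : δ ≤ 1) (hθ : 0 < θ')
    (hμ0 : 0 ≤ μ) (hμ1 : μ ≤ θ') (hμ2 : μ ≤ δ - θ') {a b : ℝ≥0∞}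
    (ha : 1 ≤ a) (hab : a ≤ b) (hb : b ≠ ⊤) :
    a⁻¹ * b⁻¹ * (a⁻¹ + b⁻¹) ^ δ / (a * b⁻¹ + a⁻¹ * b) ^ θ' ≤
      2 * a ^ (-(1+μ)) * b ^ (-(1+μ)) := by
  have ha0 : a ≠ 0 := (lt_of_lt_of_le zero_lt_one ha).ne'
  have haT : a ≠ ⊤ := (lt_of_le_of_lt hab (lt_top_iff_ne_top.mpr hb)).ne
  have hb1 : 1 ≤ b := le_trans ha hab
  have hb0 : b ≠ 0 := (lt_of_lt_of_le zero_lt_one hb1).ne'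
  have hA1 : a ^ (-θ') ≠ 0 := by simp [ENNReal.rpow_eq_zero_iff, ha0, haT]
  have hA2 : a ^ (-θ') ≠ ⊤ := by simp [ENNReal.rpow_eq_top_iff, ha0, haT]
  have hnum : (a⁻¹ + b⁻¹) ^ δ ≤ 2 * a ^ (-δ) := by
    have h1 : a⁻¹ + b⁻¹ ≤ 2 * a⁻¹ := by
      rw [two_mul]
      exact add_le_add le_rfl (ENNReal.inv_le_inv.mpr hab)
    calc (a⁻¹ + b⁻¹) ^ δ ≤ (2 * a⁻¹) ^ δ := ENNReal.rpow_le_rpow h1 hδ.le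
      _ = 2 ^ δ * (a⁻¹) ^ δ := ENNReal.mul_rpow_of_nonneg _ _ hδ.le
      _ ≤ 2 * a ^ (-δ) := by
          apply mul_le_mul'
          · calc (2:ℝ≥0∞) ^ δ ≤ 2 ^ (1:ℝ) :=
                ENNReal.rpow_le_rpow_of_exponent_le one_le_two hδ1
              _ = 2 := ENNReal.rpow_one 2
          · rw [ENNReal.inv_rpow, ← ENNReal.rpow_neg]
  have hden : (a⁻¹ * b) ^ θ' ≤ (a * b⁻¹ + a⁻¹ * b) ^ θ' :=
    ENNReal.rpow_le_rpow (le_add_self) hθ.le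
  have ea : a ^ (-1 - δ + θ') = a⁻¹ * (a ^ (-δ) * a ^ θ') := by
    rw [show -1 - δ + θ' = -1 + (-δ + θ') by ring, ENNReal.rpow_add _ _ ha0 haT,
      ENNReal.rpow_add _ _ ha0 haT, ENNReal.rpow_neg_one]
  have eb : b ^ (-1 - θ') = b⁻¹ * b ^ (-θ') := by
    rw [show -1 - θ' = -1 + -θ' by ring, ENNReal.rpow_add _ _ hb0 hb, ENNReal.rpow_neg_one]
  calc a⁻¹ * b⁻¹ * (a⁻¹ + b⁻¹) ^ δ / (a * b⁻¹ + a⁻¹ * b) ^ θ'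
      ≤ a⁻¹ * b⁻¹ * (2 * a ^ (-δ)) / (a⁻¹ * b) ^ θ' :=
        ENNReal.div_le_div (mul_le_mul' le_rfl hnum) hden
    _ = 2 * a ^ (-1 - δ + θ') * b ^ (-1 - θ') := by
        rw [ENNReal.mul_rpow_of_nonneg _ _ hθ.le, ENNReal.inv_rpow, ← ENNReal.rpow_neg a θ',
          div_eq_mul_inv, ENNReal.mul_inv (Or.inl hA1) (Or.inl hA2),
          ENNReal.rpow_neg a θ', inv_inv, ← ENNReal.rpow_neg b θ', ea, eb]
        ring
    _ ≤ 2 * a ^ (-(1+μ)) * b ^ (-(1+μ)) :=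
        mul_le_mul' (mul_le_mul' le_rfl
            (ENNReal.rpow_le_rpow_of_exponent_le ha (by linarith)))
          (ENNReal.rpow_le_rpow_of_exponent_le hb1 (by linarith))

lemma shift_tsum_eq {f : ℕ → ℝ≥0∞} (N : ℕ) (h : ∀ k, f k ≠ 0 → N ≤ k) :
    ∑' k : ℕ, f k = ∑' m : ℕ, f (N + m) := by
  refine (Function.Injective.tsum_eq (add_right_injective N) ?_).symm
  intro k hk
  rw [Function.mem_support] at hk
  have hNk := h k hk
  exact ⟨k - N, by show N + (k - N) = k; omega⟩

lemma S3_bound {μ : ℝ} (hμ : 0 < μ) (hμ1 : μ ≤ 1) (N : ℕ) (hN : 1 ≤ N) :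
    ∑' j : ℕ, (if N ≤ j then (j:ℝ≥0∞) ^ (-(1+μ)) else 0) ≤
      ENNReal.ofReal (2/μ) * ((N:ℝ≥0∞)) ^ (-μ) := by
  rw [shift_tsum_eq N (fun k hk => by by_contra hc; simp [if_neg hc] at hk)]
  have e : ∀ m : ℕ, (if N ≤ N + m then ((N + m : ℕ):ℝ≥0∞) ^ (-(1+μ)) else 0)
      = ((N + m : ℕ):ℝ≥0∞) ^ (-(1+μ)) := fun m => if_pos (Nat.le_add_right N m)
  calc ∑' m : ℕ, (if N ≤ N + m then ((N + m : ℕ):ℝ≥0∞) ^ (-(1+μ)) else 0)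
      = ∑' m : ℕ, ((N + m : ℕ):ℝ≥0∞) ^ (-(1+μ)) := by simp only [e]
    _ ≤ ENNReal.ofReal (2/μ) * ((N:ℝ≥0∞)) ^ (-μ) := tail_ennreal hμ hμ1 N hN

lemma S2_bound {μ : ℝ} (hμ : 0 < μ) (hμ1 : μ ≤ 1) :
    ∑' j : ℕ, (if 1 ≤ j then 2 * (j:ℝ≥0∞) ^ (-(1+μ)) else 0) ≤
      2 * ENNReal.ofReal (2/μ) := by
  have h : ∀ j : ℕ, (if 1 ≤ j then 2 * (j:ℝ≥0∞) ^ (-(1+μ)) else 0) =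
      2 * (if 1 ≤ j then (j:ℝ≥0∞) ^ (-(1+μ)) else 0) := by
    intro j; split <;> simp
  simp only [h]
  rw [ENNReal.tsum_mul_left]
  apply mul_le_mul' le_rfl
  calc ∑' j : ℕ, (if 1 ≤ j then (j:ℝ≥0∞) ^ (-(1+μ)) else 0)
      ≤ ENNReal.ofReal (2/μ) * ((1:ℕ):ℝ≥0∞) ^ (-μ) := S3_bound hμ hμ1 1 le_rfl
    _ = ENNReal.ofReal (2/μ) := by simp

lemma SG_bound {ν : ℝ} (hν : 0 < ν) (B : ℕ) :
    ∑' k₂ : ℕ, ∑' k₃ : ℕ, (if k₃ ≤ k₂ ∧ B ≤ k₂ then (2:ℝ≥0∞) ^ (-(k₂:ℝ)*ν) else 0) ≤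
      (∑' m : ℕ, ((m:ℝ≥0∞)+1) * (2:ℝ≥0∞) ^ (-(m:ℝ)*ν)) *
        (2:ℝ≥0∞) ^ (-(B:ℝ)*ν) * ((B:ℝ≥0∞)+1) := by
  have hinner : ∀ k₂ : ℕ,
      (∑' k₃ : ℕ, (if k₃ ≤ k₂ ∧ B ≤ k₂ then (2:ℝ≥0∞) ^ (-(k₂:ℝ)*ν) else 0)) =
      (if B ≤ k₂ then ((k₂:ℝ≥0∞)+1) * (2:ℝ≥0∞) ^ (-(k₂:ℝ)*ν) else 0) := by
    intro k₂
    by_cases hB : B ≤ k₂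
    · rw [if_pos hB]
      rw [tsum_eq_sum (s := Finset.range (k₂+1))
          (fun k₃ hk₃ => if_neg (fun hc => hk₃ (Finset.mem_range.mpr (Nat.lt_succ_of_le hc.1))))]
      rw [Finset.sum_congr rfl (fun k₃ hk₃ =>
          if_pos ⟨Nat.lt_succ_iff.mp (Finset.mem_range.mp hk₃), hB⟩)]
      rw [Finset.sum_const, Finset.card_range, nsmul_eq_mul]
      congr 1
      push_cast; ring
    · rw [if_neg hB]
      have hz : ∀ k₃ : ℕ, (if k₃ ≤ k₂ ∧ B ≤ k₂ then (2:ℝ≥0∞) ^ (-(k₂:ℝ)*ν) else 0) = 0 :=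
        fun k₃ => if_neg (fun hc => hB hc.2)
      simp only [hz, tsum_zero]
  simp only [hinner]
  rw [shift_tsum_eq B (fun k hk => by by_contra hc; simp [if_neg hc] at hk)]
  have hterm : ∀ m : ℕ,
      (if B ≤ B + m then (((B+m:ℕ):ℝ≥0∞)+1) * (2:ℝ≥0∞) ^ (-((B+m:ℕ):ℝ)*ν) else 0) ≤
      (((B:ℝ≥0∞)+1) * (2:ℝ≥0∞) ^ (-(B:ℝ)*ν)) * (((m:ℝ≥0∞)+1) * (2:ℝ≥0∞) ^ (-(m:ℝ)*ν)) := by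
    intro m
    rw [if_pos (Nat.le_add_right B m)]
    have e2 : (2:ℝ≥0∞) ^ (-((B+m:ℕ):ℝ)*ν) = (2:ℝ≥0∞) ^ (-(B:ℝ)*ν) * (2:ℝ≥0∞) ^ (-(m:ℝ)*ν) := by
      rw [← ENNReal.rpow_add _ _ (by norm_num) (by norm_num)]
      congr 1
      push_cast; ring
    rw [e2]
    have e1 : ((B+m:ℕ):ℝ≥0∞) + 1 ≤ ((B:ℝ≥0∞)+1) * ((m:ℝ≥0∞)+1) := by
      push_cast
      calc (B:ℝ≥0∞) + (m:ℝ≥0∞) + 1 ≤ (B:ℝ≥0∞) * m + ((B:ℝ≥0∞) + (m:ℝ≥0∞) + 1) := le_add_self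
        _ = ((B:ℝ≥0∞)+1) * ((m:ℝ≥0∞)+1) := by ring
    calc (((B+m:ℕ):ℝ≥0∞)+1) * ((2:ℝ≥0∞) ^ (-(B:ℝ)*ν) * (2:ℝ≥0∞) ^ (-(m:ℝ)*ν))
        ≤ (((B:ℝ≥0∞)+1) * ((m:ℝ≥0∞)+1)) * ((2:ℝ≥0∞) ^ (-(B:ℝ)*ν) * (2:ℝ≥0∞) ^ (-(m:ℝ)*ν)) :=
          mul_le_mul' e1 le_rfl
      _ = (((B:ℝ≥0∞)+1) * (2:ℝ≥0∞) ^ (-(B:ℝ)*ν)) * (((m:ℝ≥0∞)+1) * (2:ℝ≥0∞) ^ (-(m:ℝ)*ν)) := by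
          ring
  calc ∑' m : ℕ, (if B ≤ B + m then (((B+m:ℕ):ℝ≥0∞)+1) * (2:ℝ≥0∞) ^ (-((B+m:ℕ):ℝ)*ν) else 0)
      ≤ ∑' m : ℕ, (((B:ℝ≥0∞)+1) * (2:ℝ≥0∞) ^ (-(B:ℝ)*ν)) *
          (((m:ℝ≥0∞)+1) * (2:ℝ≥0∞) ^ (-(m:ℝ)*ν)) := ENNReal.tsum_le_tsum hterm
    _ = (((B:ℝ≥0∞)+1) * (2:ℝ≥0∞) ^ (-(B:ℝ)*ν)) *
          ∑' m : ℕ, (((m:ℝ≥0∞)+1) * (2:ℝ≥0∞) ^ (-(m:ℝ)*ν)) := ENNReal.tsum_mul_left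
    _ = (∑' m : ℕ, ((m:ℝ≥0∞)+1) * (2:ℝ≥0∞) ^ (-(m:ℝ)*ν)) *
        (2:ℝ≥0∞) ^ (-(B:ℝ)*ν) * ((B:ℝ≥0∞)+1) := by ring

lemma jlem {δ θ' μ : ℝ} (hδ : 0 < δ) (hδ1 : δ ≤ 1) (hθ : 0 < θ')
    (hμ0 : 0 ≤ μ) (hμ1 : μ ≤ θ') (hμ2 : μ ≤ δ - θ') {a b : ℝ≥0∞}
    (ha : 1 ≤ a) (hb : 1 ≤ b) (haT : a ≠ ⊤) (hbT : b ≠ ⊤) :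
    a⁻¹ * b⁻¹ * (a⁻¹ + b⁻¹) ^ δ / (a * b⁻¹ + a⁻¹ * b) ^ θ' ≤
      2 * a ^ (-(1+μ)) * b ^ (-(1+μ)) := by
  rcases le_total a b with h | h
  · exact jlem_half hδ hδ1 hθ hμ0 hμ1 hμ2 ha h hbT
  · have h2 := jlem_half hδ hδ1 hθ hμ0 hμ1 hμ2 hb h haT
    have e : a⁻¹ * b⁻¹ * (a⁻¹ + b⁻¹) ^ δ / (a * b⁻¹ + a⁻¹ * b) ^ θ'
        = b⁻¹ * a⁻¹ * (b⁻¹ + a⁻¹) ^ δ / (b * a⁻¹ + b⁻¹ * a) ^ θ' := by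
      rw [mul_comm a⁻¹ b⁻¹, add_comm a⁻¹ b⁻¹, add_comm (a * b⁻¹), mul_comm a⁻¹ b,
        mul_comm a b⁻¹]
    rw [e]
    calc b⁻¹ * a⁻¹ * (b⁻¹ + a⁻¹) ^ δ / (b * a⁻¹ + b⁻¹ * a) ^ θ'
        ≤ 2 * b ^ (-(1+μ)) * a ^ (-(1+μ)) := h2
      _ = 2 * a ^ (-(1+μ)) * b ^ (-(1+μ)) := mul_right_comm _ _ _

lemma pt_core {δ₂₃ θ α ν μ : ℝ} (hδ : 0 < δ₂₃) (hδ1 : δ₂₃ ≤ 1) (hθ : 0 < θ)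
    (hμ0 : 0 ≤ μ) (hμ1 : μ ≤ θ) (hμ2 : μ ≤ δ₂₃ - θ)
    (hνα : ν ≤ α) (hνδ : ν ≤ δ₂₃)
    (k₂ k₃ j₂ j₃ : ℕ) (h1 : k₃ ≤ k₂) (h3 : 1 ≤ j₂) (h4 : 1 ≤ j₃) :
    (2 : ℝ≥0∞) ^ (-((k₂ : ℝ) - (k₃ : ℝ)) * α) * ((j₂ : ℝ≥0∞))⁻¹ * ((j₃ : ℝ≥0∞))⁻¹ *
        ((2 : ℝ≥0∞) ^ (-(k₂ : ℝ)) * ((j₂ : ℝ≥0∞))⁻¹ +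
            (2 : ℝ≥0∞) ^ (-(k₃ : ℝ)) * ((j₃ : ℝ≥0∞))⁻¹) ^ δ₂₃ /
        ((j₂ : ℝ≥0∞) * ((j₃ : ℝ≥0∞))⁻¹ + ((j₂ : ℝ≥0∞))⁻¹ * (j₃ : ℝ≥0∞)) ^ θ
      ≤ (2:ℝ≥0∞) ^ (-(k₂:ℝ)*ν) * (2 * (j₂:ℝ≥0∞) ^ (-(1+μ))) *
          ((j₃:ℝ≥0∞) ^ (-(1+μ))) := by
  set a := (j₂:ℝ≥0∞) with hadef
  set b := (j₃:ℝ≥0∞) with hbdef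
  have ha : 1 ≤ a := by rw [hadef]; exact_mod_cast h3
  have hb : 1 ≤ b := by rw [hbdef]; exact_mod_cast h4
  have haT : a ≠ ⊤ := ENNReal.natCast_ne_top j₂
  have hbT : b ≠ ⊤ := ENNReal.natCast_ne_top j₃
  have hP : ((2:ℝ≥0∞) ^ (-(k₂:ℝ)) * a⁻¹ + (2:ℝ≥0∞) ^ (-(k₃:ℝ)) * b⁻¹) ^ δ₂₃ ≤
      (2:ℝ≥0∞) ^ (-(k₃:ℝ)*δ₂₃) * (a⁻¹ + b⁻¹) ^ δ₂₃ := by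
    have h2pow : (2:ℝ≥0∞) ^ (-(k₂:ℝ)) ≤ (2:ℝ≥0∞) ^ (-(k₃:ℝ)) :=
      ENNReal.rpow_le_rpow_of_exponent_le one_le_two
        (neg_le_neg (by exact_mod_cast h1))
    have hle : (2:ℝ≥0∞) ^ (-(k₂:ℝ)) * a⁻¹ + (2:ℝ≥0∞) ^ (-(k₃:ℝ)) * b⁻¹ ≤
        (2:ℝ≥0∞) ^ (-(k₃:ℝ)) * (a⁻¹ + b⁻¹) := by
      rw [mul_add]
      exact add_le_add (mul_le_mul' h2pow le_rfl) le_rfl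
    calc ((2:ℝ≥0∞) ^ (-(k₂:ℝ)) * a⁻¹ + (2:ℝ≥0∞) ^ (-(k₃:ℝ)) * b⁻¹) ^ δ₂₃
        ≤ ((2:ℝ≥0∞) ^ (-(k₃:ℝ)) * (a⁻¹ + b⁻¹)) ^ δ₂₃ := ENNReal.rpow_le_rpow hle hδ.le
      _ = (2:ℝ≥0∞) ^ (-(k₃:ℝ)*δ₂₃) * (a⁻¹ + b⁻¹) ^ δ₂₃ := by
          rw [ENNReal.mul_rpow_of_nonneg _ _ hδ.le, ← ENNReal.rpow_mul]
  have hexp : (2:ℝ≥0∞) ^ (-((k₂:ℝ) - (k₃:ℝ))*α) * (2:ℝ≥0∞) ^ (-(k₃:ℝ)*δ₂₃) ≤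
      (2:ℝ≥0∞) ^ (-(k₂:ℝ)*ν) := by
    rw [← ENNReal.rpow_add _ _ (by norm_num) (by norm_num)]
    apply ENNReal.rpow_le_rpow_of_exponent_le one_le_two
    have hk : (k₃:ℝ) ≤ (k₂:ℝ) := by exact_mod_cast h1
    nlinarith [mul_nonneg (sub_nonneg.mpr hk) (sub_nonneg.mpr hνα),
      mul_nonneg (Nat.cast_nonneg (α := ℝ) k₃) (sub_nonneg.mpr hνδ)]
  calc (2 : ℝ≥0∞) ^ (-((k₂ : ℝ) - (k₃ : ℝ)) * α) * a⁻¹ * b⁻¹ *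
        ((2 : ℝ≥0∞) ^ (-(k₂ : ℝ)) * a⁻¹ + (2 : ℝ≥0∞) ^ (-(k₃ : ℝ)) * b⁻¹) ^ δ₂₃ /
        (a * b⁻¹ + a⁻¹ * b) ^ θ
      ≤ (2 : ℝ≥0∞) ^ (-((k₂ : ℝ) - (k₃ : ℝ)) * α) * a⁻¹ * b⁻¹ *
          ((2:ℝ≥0∞) ^ (-(k₃:ℝ)*δ₂₃) * (a⁻¹ + b⁻¹) ^ δ₂₃) /
          (a * b⁻¹ + a⁻¹ * b) ^ θ :=
        ENNReal.div_le_div (mul_le_mul' le_rfl hP) le_rfl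
    _ = ((2 : ℝ≥0∞) ^ (-((k₂ : ℝ) - (k₃ : ℝ)) * α) * (2:ℝ≥0∞) ^ (-(k₃:ℝ)*δ₂₃)) *
          (a⁻¹ * b⁻¹ * (a⁻¹ + b⁻¹) ^ δ₂₃ / (a * b⁻¹ + a⁻¹ * b) ^ θ) := by
        rw [div_eq_mul_inv, div_eq_mul_inv]; ring
    _ ≤ (2:ℝ≥0∞) ^ (-(k₂:ℝ)*ν) * (2 * a ^ (-(1+μ)) * b ^ (-(1+μ))) :=
        mul_le_mul' hexp (jlem hδ hδ1 hθ hμ0 hμ1 hμ2 ha hb haT hbT)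
    _ = (2:ℝ≥0∞) ^ (-(k₂:ℝ)*ν) * (2 * a ^ (-(1+μ))) * (b ^ (-(1+μ))) := by ring

end AuxLemmasForStmt2

/-- The summability estimate `𝒮₃(A,B) ≲ A^{-δ₀} 2^{-B min(δ₀,α)} (B+1)` (Lemma 3.1, (JJA-1)):
sum over `k₂ ≥ k₃ ≥ 0` with `k₂ ≥ B`, and `j₂, j₃ ≥ 1` with `j₃ ≥ A`, of
`2^{-(k₂-k₃)α} j₂⁻¹ j₃⁻¹ (2^{-k₂}j₂⁻¹ + 2^{-k₃}j₃⁻¹)^{δ₂₃} / (j₂/j₃ + j₃/j₂)^θ`. -/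
theorem stmt2 (δ₁ δ₂₃ θ α : ℝ) (hδ₁ : δ₁ ∈ Set.Ioc (0:ℝ) 1) (hδ₂₃ : δ₂₃ ∈ Set.Ioc (0:ℝ) 1)
    (hθ : 0 < θ) (hθ' : θ < min δ₁ δ₂₃) (hα : 0 < α) :
    ∃ C : ℝ≥0∞, C ≠ ⊤ ∧ ∀ (A : ℝ), 1 ≤ A → ∀ B : ℕ,
      (∑' k₂ : ℕ, ∑' k₃ : ℕ, ∑' j₂ : ℕ, ∑' j₃ : ℕ,
          if k₃ ≤ k₂ ∧ B ≤ k₂ ∧ 1 ≤ j₂ ∧ 1 ≤ j₃ ∧ A ≤ (j₃ : ℝ) then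
            (2 : ℝ≥0∞) ^ (-((k₂ : ℝ) - (k₃ : ℝ)) * α) * ((j₂ : ℝ≥0∞))⁻¹ * ((j₃ : ℝ≥0∞))⁻¹ *
              ((2 : ℝ≥0∞) ^ (-(k₂ : ℝ)) * ((j₂ : ℝ≥0∞))⁻¹ +
                  (2 : ℝ≥0∞) ^ (-(k₃ : ℝ)) * ((j₃ : ℝ≥0∞))⁻¹) ^ δ₂₃ /
              ((j₂ : ℝ≥0∞) * ((j₃ : ℝ≥0∞))⁻¹ + ((j₂ : ℝ≥0∞))⁻¹ * (j₃ : ℝ≥0∞)) ^ θ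
          else 0)
        ≤ C * (ENNReal.ofReal A) ^ (-(min θ (min (δ₁ - θ) (δ₂₃ - θ)))) *
            (2 : ℝ≥0∞) ^ (-(B : ℝ) * min (min θ (min (δ₁ - θ) (δ₂₃ - θ))) α) *
            ((B : ℝ≥0∞) + 1) := by
  obtain ⟨hδ₁0, hδ₁1⟩ := hδ₁
  obtain ⟨hδ₂₃0, hδ₂₃1⟩ := hδ₂₃
  rw [lt_min_iff] at hθ'
  obtain ⟨hθδ₁, hθδ₂₃⟩ := hθ'
  set δ₀ := min θ (min (δ₁ - θ) (δ₂₃ - θ)) with hδ₀def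
  set ν := min δ₀ α with hνdef
  set μ := min θ (δ₂₃ - θ) with hμdef
  have hδ₀pos : 0 < δ₀ := lt_min hθ (lt_min (by linarith) (by linarith))
  have hνpos : 0 < ν := lt_min hδ₀pos hα
  have hμpos : 0 < μ := lt_min hθ (by linarith)
  have hμθ : μ ≤ θ := min_le_left _ _
  have hμ1 : μ ≤ 1 := by linarith
  have hμδθ : μ ≤ δ₂₃ - θ := min_le_right _ _
  have hδ₀μ : δ₀ ≤ μ := le_min (min_le_left _ _)
    (le_trans (min_le_right _ _) (min_le_right _ _))
  have hνα : ν ≤ α := min_le_right _ _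
  have hνδ₀ : ν ≤ δ₀ := min_le_left _ _
  have hνδ : ν ≤ δ₂₃ := by linarith
  refine ⟨(∑' m : ℕ, ((m:ℝ≥0∞)+1) * (2:ℝ≥0∞) ^ (-(m:ℝ)*ν)) * (2 * ENNReal.ofReal (2/μ)) *
      ENNReal.ofReal (2/μ), ?_, ?_⟩
  · exact ENNReal.mul_ne_top (ENNReal.mul_ne_top (geom_ne_top hνpos)
      (ENNReal.mul_ne_top (by norm_num) ENNReal.ofReal_ne_top)) ENNReal.ofReal_ne_top
  intro A hA B
  set N := ⌈A⌉₊ with hNdef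
  have hN1 : 1 ≤ N := Nat.one_le_ceil_iff.mpr (by linarith)
  have hNA : ((N:ℝ≥0∞)) ^ (-μ) ≤ (ENNReal.ofReal A) ^ (-δ₀) := by
    have hA1 : 1 ≤ ENNReal.ofReal A := ENNReal.one_le_ofReal.mpr hA
    have hAN : ENNReal.ofReal A ≤ (N:ℝ≥0∞) := by
      rw [← ENNReal.ofReal_natCast]
      exact ENNReal.ofReal_le_ofReal (Nat.le_ceil A)
    calc ((N:ℝ≥0∞)) ^ (-μ) ≤ (ENNReal.ofReal A) ^ (-μ) := by
          rw [ENNReal.rpow_neg, ENNReal.rpow_neg]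
          exact ENNReal.inv_le_inv.mpr (ENNReal.rpow_le_rpow hAN hμpos.le)
      _ ≤ (ENNReal.ofReal A) ^ (-δ₀) :=
          ENNReal.rpow_le_rpow_of_exponent_le hA1 (by linarith)
  have hpt : ∀ k₂ k₃ j₂ j₃ : ℕ,
      (if k₃ ≤ k₂ ∧ B ≤ k₂ ∧ 1 ≤ j₂ ∧ 1 ≤ j₃ ∧ A ≤ (j₃ : ℝ) then
          (2 : ℝ≥0∞) ^ (-((k₂ : ℝ) - (k₃ : ℝ)) * α) * ((j₂ : ℝ≥0∞))⁻¹ * ((j₃ : ℝ≥0∞))⁻¹ *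
            ((2 : ℝ≥0∞) ^ (-(k₂ : ℝ)) * ((j₂ : ℝ≥0∞))⁻¹ +
                (2 : ℝ≥0∞) ^ (-(k₃ : ℝ)) * ((j₃ : ℝ≥0∞))⁻¹) ^ δ₂₃ /
            ((j₂ : ℝ≥0∞) * ((j₃ : ℝ≥0∞))⁻¹ + ((j₂ : ℝ≥0∞))⁻¹ * (j₃ : ℝ≥0∞)) ^ θ
        else 0)
      ≤ (if k₃ ≤ k₂ ∧ B ≤ k₂ then (2:ℝ≥0∞) ^ (-(k₂:ℝ)*ν) else 0) *
        (if 1 ≤ j₂ then 2 * (j₂:ℝ≥0∞) ^ (-(1+μ)) else 0) *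
        (if N ≤ j₃ then (j₃:ℝ≥0∞) ^ (-(1+μ)) else 0) := by
    intro k₂ k₃ j₂ j₃
    by_cases h : k₃ ≤ k₂ ∧ B ≤ k₂ ∧ 1 ≤ j₂ ∧ 1 ≤ j₃ ∧ A ≤ (j₃ : ℝ)
    · obtain ⟨h1, h2, h3, h4, h5⟩ := h
      rw [if_pos ⟨h1, h2, h3, h4, h5⟩, if_pos ⟨h1, h2⟩, if_pos h3,
        if_pos (Nat.ceil_le.mpr h5)]
      exact pt_core hδ₂₃0 hδ₂₃1 hθ hμpos.le hμθ hμδθ hνα hνδ k₂ k₃ j₂ j₃ h1 h3 h4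
    · rw [if_neg h]; exact zero_le
  refine le_trans (ENNReal.tsum_le_tsum fun k₂ => ENNReal.tsum_le_tsum fun k₃ =>
    ENNReal.tsum_le_tsum fun j₂ => ENNReal.tsum_le_tsum fun j₃ => hpt k₂ k₃ j₂ j₃) ?_
  rw [show (∑' k₂ : ℕ, ∑' k₃ : ℕ, ∑' j₂ : ℕ, ∑' j₃ : ℕ,
      (if k₃ ≤ k₂ ∧ B ≤ k₂ then (2:ℝ≥0∞) ^ (-(k₂:ℝ)*ν) else 0) *
        (if 1 ≤ j₂ then 2 * (j₂:ℝ≥0∞) ^ (-(1+μ)) else 0) *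
        (if N ≤ j₃ then (j₃:ℝ≥0∞) ^ (-(1+μ)) else 0)) =
      (∑' k₂ : ℕ, ∑' k₃ : ℕ, (if k₃ ≤ k₂ ∧ B ≤ k₂ then (2:ℝ≥0∞) ^ (-(k₂:ℝ)*ν) else 0)) *
        (∑' j₂ : ℕ, (if 1 ≤ j₂ then 2 * (j₂:ℝ≥0∞) ^ (-(1+μ)) else 0)) *
        (∑' j₃ : ℕ, (if N ≤ j₃ then (j₃:ℝ≥0∞) ^ (-(1+μ)) else 0)) by
    simp only [ENNReal.tsum_mul_left, ENNReal.tsum_mul_right]]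
  calc (∑' k₂ : ℕ, ∑' k₃ : ℕ, (if k₃ ≤ k₂ ∧ B ≤ k₂ then (2:ℝ≥0∞) ^ (-(k₂:ℝ)*ν) else 0)) *
        (∑' j₂ : ℕ, (if 1 ≤ j₂ then 2 * (j₂:ℝ≥0∞) ^ (-(1+μ)) else 0)) *
        (∑' j₃ : ℕ, (if N ≤ j₃ then (j₃:ℝ≥0∞) ^ (-(1+μ)) else 0))
      ≤ ((∑' m : ℕ, ((m:ℝ≥0∞)+1) * (2:ℝ≥0∞) ^ (-(m:ℝ)*ν)) *
            (2:ℝ≥0∞) ^ (-(B:ℝ)*ν) * ((B:ℝ≥0∞)+1)) *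
          (2 * ENNReal.ofReal (2/μ)) *
          (ENNReal.ofReal (2/μ) * ((N:ℝ≥0∞)) ^ (-μ)) :=
        mul_le_mul' (mul_le_mul' (SG_bound hνpos B) (S2_bound hμpos hμ1))
          (S3_bound hμpos hμ1 N hN1)
    _ ≤ ((∑' m : ℕ, ((m:ℝ≥0∞)+1) * (2:ℝ≥0∞) ^ (-(m:ℝ)*ν)) *
            (2:ℝ≥0∞) ^ (-(B:ℝ)*ν) * ((B:ℝ≥0∞)+1)) *
          (2 * ENNReal.ofReal (2/μ)) *
          (ENNReal.ofReal (2/μ) * (ENNReal.ofReal A) ^ (-δ₀)) :=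
        mul_le_mul' le_rfl (mul_le_mul' le_rfl hNA)
    _ = (∑' m : ℕ, ((m:ℝ≥0∞)+1) * (2:ℝ≥0∞) ^ (-(m:ℝ)*ν)) * (2 * ENNReal.ofReal (2/μ)) *
          ENNReal.ofReal (2/μ) * (ENNReal.ofReal A) ^ (-δ₀) *
          (2:ℝ≥0∞) ^ (-(B:ℝ)*ν) * ((B:ℝ≥0∞)+1) := by ring
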